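/- Let r ∈ (0,1), λ > 0, x > 0, y ≥ 1 with R = (r/(1-r))·e^λ ≤ 1. Then there exists a probability measure μ_{x,y} on ℝ with Laplace transform ∫ e^{θt} dμ_{x,y}(t) = (1-r+r·e^θ)^x · (λ/(λ-θ))^y for all θ < λ. -/

import Mathlib

open MeasureTheory Real Set Filter Topology
open scoped ENNReal NNReal


noncomputable def gbc (x : ℝ) : ℕ → ℝ
  | 0 => 1
  | (k+1) => gbc x k * (x - k) / (k + 1)

lemma gbc_succ (x : ℝ) (k : ℕ) : gbc x (k+1) = gbc x k * (x - k) / (k + 1) := rfl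

lemma abs_gbc_succ (x : ℝ) (k : ℕ) : |gbc x (k+1)| = |gbc x k| * |x - k| / (k + 1) := by
  rw [gbc_succ, abs_div, abs_mul]
  congr 1
  rw [abs_of_pos]; positivity

noncomputable def pk (x : ℝ) (k : ℕ) : ℝ := ∏ i ∈ Finset.range k, (x - i)

lemma gbc_eq (x : ℝ) (k : ℕ) : gbc x k = pk x k / (Nat.factorial k) := by
  induction k with
  | zero => simp [gbc, pk]
  | succ n ih =>
      rw [gbc_succ, ih]
      rw [show pk x (n+1) = pk x n * (x - n) from Finset.prod_range_succ _ n, Nat.factorial_succ]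
      push_cast
      rw [div_mul_eq_mul_div, div_div]
      ring_nf

lemma gbc_zero (x : ℝ) : gbc x 0 = 1 := rfl

lemma hasDerivAt_one_add_rpow (c t : ℝ) (ht : 0 < 1 + t) :
    HasDerivAt (fun s : ℝ => (1 + s) ^ c) (c * (1 + t) ^ (c - 1)) t := by
  have h1 : HasDerivAt (fun s : ℝ => 1 + s) 1 t := (hasDerivAt_id t).const_add 1
  have h2 : HasDerivAt (fun u : ℝ => u ^ c) (c * (1 + t) ^ (c - 1)) (1 + t) :=
    Real.hasDerivAt_rpow_const (Or.inl (ne_of_gt ht))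
  have h3 := h2.comp t h1
  rw [mul_one] at h3
  exact h3

lemma iteratedDerivWithin_one_add_rpow (x z : ℝ) (hz : 0 < z) (k : ℕ) :
    ∀ t ∈ Set.Icc (0:ℝ) z,
      iteratedDerivWithin k (fun s : ℝ => (1 + s) ^ x) (Set.Icc 0 z) t
        = pk x k * (1 + t) ^ (x - k) := by
  induction k with
  | zero =>
      intro t ht
      simp [pk]
  | succ n ih =>
      intro t ht
      have ht' : 0 < 1 + t := by have := ht.1; linarith
      rw [iteratedDerivWithin_succ]
      have hcong : Set.EqOn (iteratedDerivWithin n (fun s : ℝ => (1 + s) ^ x) (Set.Icc 0 z))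
          (fun t => pk x n * (1 + t) ^ (x - n)) (Set.Icc 0 z) := fun s hs => ih s hs
      rw [derivWithin_congr hcong (ih t ht)]
      have hd : HasDerivAt (fun t : ℝ => pk x n * (1 + t) ^ (x - n))
          (pk x n * ((x - n) * (1 + t) ^ (x - n - 1))) t :=
        (hasDerivAt_one_add_rpow (x - n) t ht').const_mul _
      rw [hd.hasDerivWithinAt.derivWithin (uniqueDiffOn_Icc hz t ht)]
      rw [show pk x (n+1) = pk x n * (x - n) from Finset.prod_range_succ _ n]
      push_cast
      ring_nf

lemma contDiffOn_one_add_rpow (x z : ℝ) (n : ℕ∞) :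
    ContDiffOn ℝ n (fun s : ℝ => (1 + s) ^ x) (Set.Icc (0:ℝ) z) := by
  intro t ht
  have ht' : (0:ℝ) < 1 + t := by have := ht.1; linarith
  have h1 : ContDiffAt ℝ n (fun s : ℝ => 1 + s) t := (contDiff_const.add contDiff_id).contDiffAt
  have h2 : ContDiffAt ℝ n (fun u : ℝ => u ^ x) (1 + t) :=
    Real.contDiffAt_rpow_const_of_ne (ne_of_gt ht')
  exact (h2.comp t h1).contDiffWithinAt




lemma summable_abs_gbc (x z : ℝ) (hx : 0 < x) (h0 : 0 ≤ z) (h1 : z < 1) :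
    Summable (fun k : ℕ => |gbc x k| * z ^ k) := by
  apply summable_of_ratio_norm_eventually_le h1
  filter_upwards [eventually_ge_atTop (Nat.ceil x)] with n hn
  have hxn : x ≤ (n : ℝ) := le_trans (Nat.le_ceil x) (by exact_mod_cast hn)
  have h2 : |x - (n:ℝ)| = (n:ℝ) - x := by rw [abs_of_nonpos (by linarith), neg_sub]
  have hz : ∀ m : ℕ, (0:ℝ) ≤ |gbc x m| * z ^ m :=
    fun m => mul_nonneg (abs_nonneg _) (pow_nonneg h0 m)
  rw [Real.norm_eq_abs, Real.norm_eq_abs, abs_of_nonneg (hz _),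
    abs_of_nonneg (hz _), abs_gbc_succ, h2, pow_succ]
  have h3 : ((n:ℝ) - x)/((n:ℝ)+1) ≤ 1 := div_le_one_of_le₀ (by linarith) (by positivity)
  have h4 : (0:ℝ) ≤ |gbc x n| * z^n := by positivity
  have h5 : |gbc x n| * ((n:ℝ) - x)/((n:ℝ)+1) ≤ |gbc x n| := by
    rw [mul_div_assoc]
    nlinarith [abs_nonneg (gbc x n)]
  calc |gbc x n| * ((n:ℝ) - x) / (↑n + 1) * (z ^ n * z)
      ≤ |gbc x n| * (z ^ n * z) := by
        apply mul_le_mul_of_nonneg_right h5 (mul_nonneg (pow_nonneg h0 n) h0)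
    _ = z * (|gbc x n| * z ^ n) := by ring

theorem hasSum_gbc (x z : ℝ) (hx : 0 < x) (h0 : 0 ≤ z) (h1 : z < 1) :
    HasSum (fun k : ℕ => gbc x k * z ^ k) ((1 + z) ^ x) := by
  rcases eq_or_lt_of_le h0 with hz0 | hz0
  · rw [← hz0]
    have h := hasSum_single (f := fun k : ℕ => gbc x k * (0:ℝ) ^ k) 0
      (fun b hb => by simp [zero_pow hb])
    simpa [gbc_zero] using h
  set f : ℝ → ℝ := fun s => (1 + s) ^ x with hf
  set a : ℕ → ℝ := fun k => gbc x k * z ^ k with ha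
  have habs : (fun k : ℕ => |a k|) = fun k => |gbc x k| * z ^ k := by
    funext k
    rw [ha, abs_mul, abs_of_nonneg (pow_nonneg h0 k)]
  have hsuma : Summable a := by
    apply Summable.of_abs
    rw [habs]; exact summable_abs_gbc x z hx h0 h1
  have hb0 : Tendsto (fun n : ℕ => |gbc x n| * z ^ n) atTop (𝓝 0) :=
    (summable_abs_gbc x z hx h0 h1).tendsto_atTop_zero
  -- Taylor remainder bound
  have key : ∀ n : ℕ, x ≤ n + 1 →
      |(∑ k ∈ Finset.range (n+1), a k) - (1 + z) ^ x| ≤ |gbc x (n+1)| * z ^ (n+1) := by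
    intro n hn
    have hdiff : DifferentiableOn ℝ
        (iteratedDerivWithin n f (Set.Icc 0 z)) (Set.Ioo 0 z) := by
      apply DifferentiableOn.congr (f := fun t => pk x n * (1 + t) ^ ((x:ℝ) - n))
      · intro t ht
        have ht' : (0:ℝ) < 1 + t := by have := ht.1; linarith
        exact (((hasDerivAt_one_add_rpow ((x:ℝ) - n) t ht').const_mul
          (pk x n)).differentiableAt).differentiableWithinAt
      · intro t ht
        exact iteratedDerivWithin_one_add_rpow x z hz0 n t (Set.Ioo_subset_Icc_self ht)
    obtain ⟨x', hx', heq⟩ := taylor_mean_remainder_lagrange (f := f) (x₀ := 0) (x := z) (n := n)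
      hz0.ne (by rw [Set.uIcc_of_le h0]; exact contDiffOn_one_add_rpow x z n)
      (by rw [Set.uIcc_of_le h0, Set.uIoo_of_le h0]; exact hdiff)
    rw [Set.uIcc_of_le h0] at heq
    rw [Set.uIoo_of_le h0] at hx'
    have hT : taylorWithinEval f n (Set.Icc 0 z) 0 z = ∑ k ∈ Finset.range (n+1), a k := by
      rw [taylor_within_apply]
      apply Finset.sum_congr rfl
      intro k hk
      rw [iteratedDerivWithin_one_add_rpow x z hz0 k 0 (Set.left_mem_Icc.mpr h0)]
      simp only [ha, gbc_eq, smul_eq_mul, sub_zero, add_zero, Real.one_rpow]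
      ring
    have hiter := iteratedDerivWithin_one_add_rpow x z hz0 (n+1) x' (Set.Ioo_subset_Icc_self hx')
    push_cast at hiter
    rw [hiter] at heq
    have hbound : |(1 + x') ^ (x - ((n:ℝ)+1))| ≤ 1 := by
      rw [abs_of_nonneg (Real.rpow_nonneg (by nlinarith [hx'.1]) _)]
      apply Real.rpow_le_one_of_one_le_of_nonpos (by nlinarith [hx'.1]) (by push_cast; linarith)
    have hfacpos : (0:ℝ) < ((n+1).factorial : ℝ) := by
      exact_mod_cast Nat.factorial_pos (n+1)
    have heq2 : (∑ k ∈ Finset.range (n+1), a k) - (1 + z) ^ x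
        = -(pk x (n+1) * (1 + x') ^ (x - ((n:ℝ)+1)) * (z - 0) ^ (n+1) / ((n+1).factorial : ℝ)) := by
      rw [← heq, hT]
      have : f z = (1 + z) ^ x := rfl
      rw [this]; ring
    have hrhs : |gbc x (n+1)| * z ^ (n+1) = |pk x (n+1)| * z ^ (n+1) / (((n+1).factorial : ℝ)) := by
      rw [gbc_eq, abs_div, abs_of_pos hfacpos]; ring
    rw [heq2, abs_neg, hrhs, abs_div, abs_of_pos hfacpos, abs_mul, abs_mul, sub_zero,
      abs_of_nonneg (pow_nonneg h0 (n+1))]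
    calc |pk x (n+1)| * |(1 + x') ^ (x - ((n:ℝ)+1))| * z ^ (n+1) / (((n+1).factorial : ℝ))
        ≤ |pk x (n+1)| * 1 * z ^ (n+1) / (((n+1).factorial : ℝ)) := by
          gcongr
      _ = |pk x (n+1)| * z ^ (n+1) / (((n+1).factorial : ℝ)) := by ring
  -- conclude via uniqueness of limits
  have hS : Tendsto (fun n : ℕ => ∑ k ∈ Finset.range n, a k) atTop (𝓝 ((1 + z) ^ x)) := by
    rw [tendsto_iff_dist_tendsto_zero]
    have hg : Tendsto (fun n : ℕ => |gbc x (n+1)| * z ^ (n+1)) atTop (𝓝 0) := by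
      have := (tendsto_add_atTop_iff_nat 1).mpr hb0
      exact this
    have h1' : Tendsto (fun n : ℕ => dist (∑ k ∈ Finset.range (n+1), a k) ((1 + z) ^ x))
        atTop (𝓝 0) := by
      refine squeeze_zero' (Eventually.of_forall fun n => dist_nonneg) ?_ hg
      filter_upwards [eventually_ge_atTop (Nat.ceil x)] with n hn
      have hxn : x ≤ (n:ℝ) + 1 := by
        have : x ≤ (n:ℝ) := le_trans (Nat.le_ceil x) (by exact_mod_cast hn)
        linarith
      rw [Real.dist_eq]
      exact key n hxn
    exact (tendsto_add_atTop_iff_nat 1).mp h1'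
  have := hsuma.hasSum.tendsto_sum_nat
  have heq := tendsto_nhds_unique this hS
  rw [← heq]
  exact hsuma.hasSum

lemma gbc_nonneg (x : ℝ) (hx : 0 < x) : ∀ k, k ≤ Nat.floor x + 1 → 0 ≤ gbc x k := by
  intro k
  induction k with
  | zero => intro _; rw [gbc_zero]; norm_num
  | succ n ih =>
      intro hn
      have hn' : n ≤ Nat.floor x := Nat.lt_succ_iff.mp (Nat.lt_of_succ_le hn)
      have hnx : (n : ℝ) ≤ x := le_trans (by exact_mod_cast hn') (Nat.floor_le hx.le)
      rw [gbc_succ]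
      apply div_nonneg (mul_nonneg (ih (le_trans (Nat.le_succ n) hn)) (by linarith)) (by positivity)

lemma gbc_sign (x : ℝ) (hx : 0 < x) : ∀ j, 0 ≤ (-1:ℝ)^j * gbc x (Nat.floor x + 1 + j) := by
  set m := Nat.floor x + 1 with hm
  intro j
  induction j with
  | zero => simpa using gbc_nonneg x hx m le_rfl
  | succ n ih =>
      have hmr : (m : ℝ) = (Nat.floor x : ℝ) + 1 := by rw [hm]; push_cast; ring
      have hxm : x < (m : ℝ) := by rw [hmr]; exact Nat.lt_floor_add_one x
      have hc : x - (((m + n : ℕ)) : ℝ) < 0 := by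
        push_cast; linarith [Nat.cast_nonneg (α := ℝ) n, hxm]
      have : m + (n+1) = (m + n) + 1 := by ring
      rw [this, gbc_succ, pow_succ]
      have key : (-1:ℝ)^n * -1 * (gbc x (m+n) * (x - ((m+n : ℕ) : ℝ)) / (((m+n : ℕ) : ℝ) + 1))
          = ((-1:ℝ)^n * gbc x (m+n)) * ((((m+n : ℕ) : ℝ) - x) / (((m+n : ℕ) : ℝ) + 1)) := by
        ring
      rw [key]
      apply mul_nonneg ih
      apply div_nonneg _ (by positivity)
      linarith [hc]

lemma abs_gbc_anti (x : ℝ) (hx : 0 < x) (k : ℕ) (hk : x ≤ k) :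
    |gbc x (k+1)| ≤ |gbc x k| := by
  rw [abs_gbc_succ, show |x - (k:ℝ)| = (k:ℝ) - x from by
    rw [abs_of_nonpos (by linarith : x - (k:ℝ) ≤ 0), neg_sub]]
  rw [div_le_iff₀ (by positivity : (0:ℝ) < (k:ℝ)+1)]
  nlinarith [abs_nonneg (gbc x k), Nat.cast_nonneg (α := ℝ) k]

lemma alt_bounds (c : ℕ → ℝ) (hc0 : ∀ j, 0 ≤ c j) (hmono : ∀ j, c (j+1) ≤ c j) :
    ∀ n, -c 0 ≤ (∑ j ∈ Finset.range n, (-1:ℝ)^(j+1) * c j) ∧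
      (∑ j ∈ Finset.range n, (-1:ℝ)^(j+1) * c j) ≤ 0 := by
  set T : ℕ → ℝ := fun n => ∑ j ∈ Finset.range n, (-1:ℝ)^(j+1) * c j with hT
  have hTsucc : ∀ n, T (n+1) = T n + (-1:ℝ)^(n+1) * c n := fun n => Finset.sum_range_succ _ n
  have hpar : ∀ n, (-c 0 ≤ T (2*n) ∧ T (2*n) ≤ 0) ∧ (-c 0 ≤ T (2*n+1) ∧ T (2*n+1) ≤ 0) := by
    intro n
    induction n with
    | zero =>
        constructor
        · constructor <;> simp [hT, hc0 0]
        · have : T 1 = -c 0 := by simp [hT]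
          rw [this]; exact ⟨le_rfl, by linarith [hc0 0]⟩
    | succ n ih =>
        have e1 : (-1:ℝ)^(2*n+1) = -1 := Odd.neg_one_pow ⟨n, by ring⟩
        have e2 : (-1:ℝ)^(2*n+1+1) = 1 := Even.neg_one_pow ⟨n+1, by ring⟩
        have e3 : (-1:ℝ)^(2*n+2+1) = -1 := Odd.neg_one_pow ⟨n+1, by ring⟩
        have h2 : T (2*n+2) = T (2*n+1) + c (2*n+1) := by
          rw [hTsucc (2*n+1), e2]; ring
        have h2' : T (2*n+2) = T (2*n) + (-1:ℝ)^(2*n+1) * c (2*n) + c (2*n+1) := by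
          rw [h2, hTsucc (2*n)]
        have h3 : T (2*n+3) = T (2*n+2) - c (2*n+2) := by
          rw [hTsucc (2*n+2), e3]; ring
        have hm1 := hmono (2*n)
        have hm2 := hmono (2*n+1)
        have hc1 := hc0 (2*n)
        have hc2 := hc0 (2*n+1)
        have hc3 := hc0 (2*n+2)
        obtain ⟨⟨l0, u0⟩, ⟨l1, u1⟩⟩ := ih
        have goal1 : -c 0 ≤ T (2*(n+1)) ∧ T (2*(n+1)) ≤ 0 := by
          have h2n : 2*(n+1) = 2*n+2 := by ring
          rw [h2n]
          constructor
          · rw [h2]; linarith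
          · rw [h2', e1]; linarith
        constructor
        · exact goal1
        · have h2n : 2*(n+1)+1 = 2*n+3 := by ring
          rw [h2n]
          have h2n' : 2*(n+1) = 2*n+2 := by ring
          rw [h2n'] at goal1
          constructor
          · rw [h3, h2]; linarith
          · rw [h3]; linarith
  intro n
  rcases Nat.even_or_odd n with ⟨k, hk⟩ | ⟨k, hk⟩
  · have : n = 2*k := by omega
    rw [this]; exact (hpar k).1
  · have : n = 2*k+1 := by omega
    rw [this]; exact (hpar k).2

lemma neg_one_pow_abs (i : ℕ) (v : ℝ) (h : 0 ≤ (-1:ℝ)^i * v) : v = (-1:ℝ)^i * |v| := by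
  have h1 : |(-1:ℝ)^i * v| = (-1:ℝ)^i * v := abs_of_nonneg h
  have h2 : |(-1:ℝ)^i * v| = |v| := by
    rw [abs_mul, abs_pow, abs_neg, abs_one, one_pow, one_mul]
  have h3 : |v| = (-1:ℝ)^i * v := by rw [← h2, h1]
  have h4 : ((-1:ℝ)^i) * ((-1:ℝ)^i) = 1 := by
    rw [← pow_add]
    exact Even.neg_one_pow ⟨i, by ring⟩
  calc v = ((-1:ℝ)^i * (-1:ℝ)^i) * v := by rw [h4]; ring
    _ = (-1:ℝ)^i * |v| := by rw [h3]; ring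

lemma partial_sum_nonneg (x z : ℝ) (hx : 0 < x) (h0 : 0 ≤ z) (h1 : z ≤ 1) (n : ℕ) :
    0 ≤ ∑ k ∈ Finset.range n, gbc x k * z ^ k := by
  set m := Nat.floor x + 1 with hm
  set a : ℕ → ℝ := fun k => gbc x k * z ^ k with ha
  have hxm : x ≤ (m : ℝ) := by
    rw [hm]; push_cast; linarith [Nat.lt_floor_add_one x]
  have hterm : ∀ k, k ≤ m → 0 ≤ a k := fun k hk =>
    mul_nonneg (gbc_nonneg x hx k hk) (pow_nonneg h0 k)
  rcases le_or_gt n (m+1) with hn | hn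
  · apply Finset.sum_nonneg
    intro k hk
    have hk' : k < n := Finset.mem_range.mp hk
    exact hterm k (by omega)
  · set p := n - (m+1) with hp
    have hnp : n = (m+1) + p := by omega
    set c : ℕ → ℝ := fun j => |a (m+1+j)| with hc
    have hsign : ∀ j, 0 ≤ (-1:ℝ)^(j+1) * a (m+1+j) := by
      intro j
      have h' := gbc_sign x hx (j+1)
      have : m + 1 + j = m + (j+1) := by ring
      rw [ha]
      have key : (-1:ℝ)^(j+1) * (gbc x (m+1+j) * z^(m+1+j))
          = ((-1:ℝ)^(j+1) * gbc x (m + (j+1))) * z^(m+1+j) := by rw [this]; ring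
      rw [key]
      exact mul_nonneg h' (pow_nonneg h0 _)
    have hrepr : ∀ j, a (m+1+j) = (-1:ℝ)^(j+1) * c j := fun j =>
      neg_one_pow_abs (j+1) _ (hsign j)
    have hcmono : ∀ j, c (j+1) ≤ c j := by
      intro j
      rw [hc]
      simp only [ha]
      have e : m + 1 + (j+1) = (m+1+j) + 1 := by ring
      rw [e, abs_mul, abs_mul, abs_of_nonneg (pow_nonneg h0 _), abs_of_nonneg (pow_nonneg h0 _)]
      apply mul_le_mul
      · refine abs_gbc_anti x hx _ ?_
        have hxm' : x < (Nat.floor x : ℝ) + 1 := Nat.lt_floor_add_one x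
        have hmr : ((m+1+j : ℕ) : ℝ) = (Nat.floor x : ℝ) + 2 + j := by
          rw [hm]; push_cast; ring
        rw [hmr]
        linarith [Nat.cast_nonneg (α := ℝ) j]
      · exact pow_le_pow_of_le_one h0 h1 (Nat.le_succ _)
      · exact pow_nonneg h0 _
      · exact abs_nonneg _
    have hc0 : ∀ j, 0 ≤ c j := fun j => abs_nonneg _
    have hsplit : ∑ k ∈ Finset.range n, a k
        = (∑ k ∈ Finset.range (m+1), a k) + ∑ j ∈ Finset.range p, a (m+1+j) := by
      rw [hnp, Finset.sum_range_add]
    have htail : ∑ j ∈ Finset.range p, a (m+1+j) = ∑ j ∈ Finset.range p, (-1:ℝ)^(j+1) * c j :=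
      Finset.sum_congr rfl (fun j _ => hrepr j)
    have hbound := (alt_bounds c hc0 hcmono p).1
    have hc0am : c 0 ≤ a m := by
      rw [hc]
      simp only [ha, add_zero]
      rw [abs_mul, abs_of_nonneg (pow_nonneg h0 _)]
      have h5 : |gbc x (m+1)| ≤ |gbc x m| := abs_gbc_anti x hx m hxm
      have h6 : |gbc x m| = gbc x m := abs_of_nonneg (gbc_nonneg x hx m le_rfl)
      calc |gbc x (m+1)| * z^(m+1) ≤ |gbc x m| * z^m := by
            apply mul_le_mul (h5) (pow_le_pow_of_le_one h0 h1 (Nat.le_succ _))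
              (pow_nonneg h0 _) (abs_nonneg _)
        _ = gbc x m * z^m := by rw [h6]
    have hhead : ∑ k ∈ Finset.range (m+1), a k = (∑ k ∈ Finset.range m, a k) + a m :=
      Finset.sum_range_succ _ _
    have hheadnn : 0 ≤ ∑ k ∈ Finset.range m, a k :=
      Finset.sum_nonneg (fun k hk => hterm k (Finset.mem_range.mp hk).le)
    rw [hsplit, htail]
    have : -c 0 ≤ ∑ j ∈ Finset.range p, (-1:ℝ)^(j+1) * c j := hbound
    linarith

noncomputable def Gk (b y : ℝ) (k : ℕ) (t : ℝ) : ℝ :=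
  Set.indicator (Set.Ioi (k:ℝ)) (fun t => Real.exp (-(b*t)) * (t - k) ^ (y-1)) t

lemma Gk_nonneg (b y : ℝ) (k : ℕ) (t : ℝ) : 0 ≤ Gk b y k t := by
  apply Set.indicator_nonneg
  intro s hs
  exact mul_nonneg (Real.exp_pos _).le (Real.rpow_nonneg (by simp at hs; linarith) _)

lemma Gk_measurable (b y : ℝ) (hy : 1 ≤ y) (k : ℕ) : Measurable (Gk b y k) := by
  apply Measurable.indicator _ measurableSet_Ioi
  exact ((measurable_const.mul measurable_id).neg.exp).mul
    ((Real.continuous_rpow_const (by linarith)).comp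
      (continuous_id.sub continuous_const)).measurable

lemma exp_mul_Gk (l θ y : ℝ) (k : ℕ) (t : ℝ) :
    Real.exp (θ*t) * Gk l y k t = Gk (l-θ) y k t := by
  unfold Gk
  by_cases h : t ∈ Set.Ioi (k:ℝ)
  · rw [Set.indicator_of_mem h, Set.indicator_of_mem h, ← mul_assoc, ← Real.exp_add]
    ring_nf
  · rw [Set.indicator_of_notMem h, Set.indicator_of_notMem h, mul_zero]

lemma Gk_zero (b y : ℝ) (k : ℕ) (t : ℝ) (h : t ≤ k) : Gk b y k t = 0 :=
  Set.indicator_of_notMem (by simpa using h) _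

lemma Gk_anti (b y : ℝ) (hy : 1 ≤ y) (k : ℕ) (t : ℝ) : Gk b y (k+1) t ≤ Gk b y k t := by
  rcases le_or_gt t ((k:ℝ)+1) with h | h
  · rw [Gk_zero b y (k+1) t (by push_cast; linarith)]
    exact Gk_nonneg b y k t
  · have h1 : t ∈ Set.Ioi (((k+1:ℕ)):ℝ) := by simp; push_cast; linarith
    have h2 : t ∈ Set.Ioi ((k:ℕ):ℝ) := by simp; push_cast; linarith
    unfold Gk
    rw [Set.indicator_of_mem h1, Set.indicator_of_mem h2]
    apply mul_le_mul_of_nonneg_left _ (Real.exp_pos _).le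
    apply Real.rpow_le_rpow (by push_cast; linarith) (by push_cast; linarith) (by linarith)

lemma Gk_integrable (b y : ℝ) (hb : 0 < b) (hy : 0 < y) (k : ℕ) :
    Integrable (Gk b y k) := by
  have base : IntegrableOn (fun s : ℝ => s^(y-1) * Real.exp (-(b*s))) (Set.Ioi 0) := by
    have := integrableOn_rpow_mul_exp_neg_mul_rpow (s := y-1) (p := 1) (b := b)
      (by linarith) one_pos hb
    apply this.congr_fun _ measurableSet_Ioi
    intro s hs
    simp only [Real.rpow_one, neg_mul]
  have hW : Integrable (fun s : ℝ =>
      Set.indicator (Set.Ioi (0:ℝ)) (fun s => Real.exp (-(b*(s+k))) * s ^ (y-1)) s) := by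
    apply IntegrableOn.integrable_indicator _ measurableSet_Ioi
    apply IntegrableOn.congr_fun ((base.const_mul (Real.exp (-(b*k)))))  _ measurableSet_Ioi
    intro s hs
    show Real.exp (-(b*(k:ℝ))) * (s ^ (y-1) * Real.exp (-(b*s)))
        = Real.exp (-(b*(s+(k:ℝ)))) * s ^ (y-1)
    rw [show (-(b*(s+(k:ℝ)))) = -(b*(k:ℝ)) + -(b*s) from by ring, Real.exp_add]
    ring
  have hGW : Gk b y k = fun t => Set.indicator (Set.Ioi (0:ℝ))
      (fun s => Real.exp (-(b*(s+k))) * s ^ (y-1)) (t - k) := by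
    funext t
    unfold Gk
    by_cases h : t ∈ Set.Ioi ((k:ℕ):ℝ)
    · have h' : t - (k:ℝ) ∈ Set.Ioi (0:ℝ) := by simp at h ⊢; linarith
      rw [Set.indicator_of_mem h, Set.indicator_of_mem h']
      have : t - (k:ℝ) + k = t := by ring
      rw [this]
    · have h' : t - (k:ℝ) ∉ Set.Ioi (0:ℝ) := by simp at h ⊢; linarith
      rw [Set.indicator_of_notMem h, Set.indicator_of_notMem h']
  rw [hGW]
  exact hW.comp_sub_right (k:ℝ)

lemma Gk_integral (b y : ℝ) (hb : 0 < b) (hy : 0 < y) (k : ℕ) :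
    ∫ t, Gk b y k t = Real.exp (-(b*k)) * ((1/b)^y * Real.Gamma y) := by
  have hGW : Gk b y k = fun t => Set.indicator (Set.Ioi (0:ℝ))
      (fun s => Real.exp (-(b*(s+k))) * s ^ (y-1)) (t - k) := by
    funext t
    unfold Gk
    by_cases h : t ∈ Set.Ioi ((k:ℕ):ℝ)
    · have h' : t - (k:ℝ) ∈ Set.Ioi (0:ℝ) := by simp at h ⊢; linarith
      rw [Set.indicator_of_mem h, Set.indicator_of_mem h']
      have : t - (k:ℝ) + k = t := by ring
      rw [this]
    · have h' : t - (k:ℝ) ∉ Set.Ioi (0:ℝ) := by simp at h ⊢; linarith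
      rw [Set.indicator_of_notMem h, Set.indicator_of_notMem h']
  rw [hGW, integral_sub_right_eq_self _ (k:ℝ), integral_indicator measurableSet_Ioi]
  have : ∀ s ∈ Set.Ioi (0:ℝ), Real.exp (-(b*(s+k))) * s ^ (y-1)
      = Real.exp (-(b*k)) * (s ^ (y-1) * Real.exp (-(b*s))) := by
    intro s hs
    rw [show (-(b*(s+(k:ℝ)))) = -(b*(k:ℝ)) + -(b*s) from by ring, Real.exp_add]
    ring
  rw [setIntegral_congr_fun measurableSet_Ioi this, integral_const_mul _ _,
    Real.integral_rpow_mul_exp_neg_mul_Ioi hy hb]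

-- Abel summation identity
lemma abel_identity (c d : ℕ → ℝ) (N : ℕ) :
    ∑ k ∈ Finset.range N, c k * d k
      = (∑ k ∈ Finset.range N,
          (∑ j ∈ Finset.range (k+1), c j) * (d k - d (k+1)))
        + (∑ j ∈ Finset.range N, c j) * d N := by
  induction N with
  | zero => simp
  | succ n ih =>
      rw [Finset.sum_range_succ (f := fun k => c k * d k), ih,
        Finset.sum_range_succ (f := fun k => (∑ j ∈ Finset.range (k+1), c j) * (d k - d (k+1))),
        Finset.sum_range_succ (f := c)]
      ring


section core

-- general coefficient machinery
noncomputable def fbg (c : ℕ → ℝ) (y b : ℝ) (t : ℝ) : ℝ := ∑' k : ℕ, c k * Gk b y k t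

variable (c : ℕ → ℝ) (y b : ℝ)

lemma fbg_eq_sum (t : ℝ) (N : ℕ) (ht : t ≤ N) :
    fbg c y b t = ∑ k ∈ Finset.range N, c k * Gk b y k t := by
  apply tsum_eq_sum
  intro k hk
  have hNk : N ≤ k := by
    by_contra h
    exact hk (Finset.mem_range.mpr (Nat.lt_of_not_le h))
  have : (N:ℝ) ≤ k := by exact_mod_cast hNk
  rw [Gk_zero b y k t (by linarith), mul_zero]

lemma fbg_measurable (hy : 1 ≤ y) : Measurable (fbg c y b) := by
  apply measurable_of_tendsto_metrizable
    (f := fun N t => ∑ k ∈ Finset.range N, c k * Gk b y k t)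
  · intro N
    apply Finset.measurable_sum
    intro k _
    exact (Gk_measurable b y hy k).const_mul _
  · rw [tendsto_pi_nhds]
    intro t
    apply Tendsto.congr' _ tendsto_const_nhds
    filter_upwards [eventually_ge_atTop (Nat.ceil t)] with N hN
    have htN : t ≤ N := le_trans (Nat.le_ceil t) (by exact_mod_cast hN)
    exact fbg_eq_sum c y b t N htN

lemma term_lintegral (hy : 1 ≤ y) (hb : 0 < b) (a : ℝ) (ha : 0 ≤ a) (k : ℕ) :
    ∫⁻ t, ENNReal.ofReal (a * Gk b y k t)
      = ENNReal.ofReal (a * (Real.exp (-(b*k)) * ((1/b)^y * Real.Gamma y))) := by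
  rw [← ofReal_integral_eq_lintegral_ofReal
    ((Gk_integrable b y hb (by linarith) k).const_mul a)
    (Eventually.of_forall (fun t => mul_nonneg ha (Gk_nonneg b y k t)))]
  rw [integral_const_mul, Gk_integral b y hb (by linarith) k]

lemma fbg_abs_le (hy : 1 ≤ y) (t : ℝ) :
    ENNReal.ofReal |fbg c y b t| ≤ ∑' k : ℕ, ENNReal.ofReal (|c k| * Gk b y k t) := by
  set N := Nat.ceil t with hN
  have htN : t ≤ N := Nat.le_ceil t
  rw [fbg_eq_sum c y b t N htN]
  calc ENNReal.ofReal |∑ k ∈ Finset.range N, c k * Gk b y k t|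
      ≤ ENNReal.ofReal (∑ k ∈ Finset.range N, |c k| * Gk b y k t) := by
        apply ENNReal.ofReal_le_ofReal
        refine le_trans (Finset.abs_sum_le_sum_abs _ _) ?_
        apply Finset.sum_le_sum
        intro k _
        rw [abs_mul, abs_of_nonneg (Gk_nonneg b y k t)]
    _ = ∑ k ∈ Finset.range N, ENNReal.ofReal (|c k| * Gk b y k t) := by
        rw [ENNReal.ofReal_sum_of_nonneg]
        intro k _
        exact mul_nonneg (abs_nonneg _) (Gk_nonneg b y k t)
    _ ≤ ∑' k : ℕ, ENNReal.ofReal (|c k| * Gk b y k t) := ENNReal.sum_le_tsum _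

lemma lintegral_abs_terms (hy : 1 ≤ y) (hb : 0 < b)
    (hsum : Summable (fun k : ℕ => |c k| * Real.exp (-(b*k)))) :
    ∑' k : ℕ, ∫⁻ t, ENNReal.ofReal (|c k| * Gk b y k t)
      = ENNReal.ofReal (∑' k : ℕ, |c k| * (Real.exp (-(b*k)) * ((1/b)^y * Real.Gamma y))) := by
  have h1 : ∀ k : ℕ, ∫⁻ t, ENNReal.ofReal (|c k| * Gk b y k t)
      = ENNReal.ofReal (|c k| * (Real.exp (-(b*k)) * ((1/b)^y * Real.Gamma y))) :=
    fun k => term_lintegral y b hy hb _ (abs_nonneg _) k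
  rw [tsum_congr h1]
  rw [← ENNReal.ofReal_tsum_of_nonneg]
  · intro k
    have h2 : (0:ℝ) ≤ (1/b)^y * Real.Gamma y :=
      mul_nonneg (Real.rpow_nonneg (by positivity) _) (Real.Gamma_nonneg_of_nonneg (by linarith))
    exact mul_nonneg (abs_nonneg _) (mul_nonneg (Real.exp_pos _).le h2)
  · exact Summable.congr (hsum.mul_right ((1/b)^y * Real.Gamma y))
      (fun k => mul_assoc _ _ _)

lemma fbg_integrable (hy : 1 ≤ y) (hb : 0 < b)
    (hsum : Summable (fun k : ℕ => |c k| * Real.exp (-(b*k)))) :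
    Integrable (fbg c y b) := by
  refine ⟨(fbg_measurable c y b hy).aestronglyMeasurable, ?_⟩
  rw [hasFiniteIntegral_iff_norm]
  calc ∫⁻ t, ENNReal.ofReal ‖fbg c y b t‖
      ≤ ∫⁻ t, ∑' k : ℕ, ENNReal.ofReal (|c k| * Gk b y k t) := by
        apply lintegral_mono
        intro t
        simpa only [Real.norm_eq_abs] using fbg_abs_le c y b hy t
    _ = ∑' k : ℕ, ∫⁻ t, ENNReal.ofReal (|c k| * Gk b y k t) := by
        apply lintegral_tsum
        intro k
        exact (ENNReal.measurable_ofReal.comp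
          ((Gk_measurable b y hy k).const_mul _)).aemeasurable
    _ = ENNReal.ofReal (∑' k : ℕ, |c k| * (Real.exp (-(b*k)) * ((1/b)^y * Real.Gamma y))) :=
        lintegral_abs_terms c y b hy hb hsum
    _ < ⊤ := ENNReal.ofReal_lt_top

lemma fbg_integral (hy : 1 ≤ y) (hb : 0 < b)
    (hsum : Summable (fun k : ℕ => |c k| * Real.exp (-(b*k)))) :
    ∫ t, fbg c y b t
      = ∑' k : ℕ, c k * (Real.exp (-(b*k)) * ((1/b)^y * Real.Gamma y)) := by
  have hmeas : ∀ k : ℕ, AEStronglyMeasurable (fun t => c k * Gk b y k t) volume :=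
    fun k => ((Gk_measurable b y hy k).const_mul _).aestronglyMeasurable
  have hnorm : ∀ k : ℕ, (fun t => (‖c k * Gk b y k t‖₊ : ℝ≥0∞))
      = fun t => ENNReal.ofReal (|c k| * Gk b y k t) := by
    intro k
    funext t
    change ‖c k * Gk b y k t‖ₑ = _
    rw [Real.enorm_eq_ofReal_abs, abs_mul, abs_of_nonneg (Gk_nonneg b y k t)]
  have hf' : ∑' k : ℕ, ∫⁻ t, (‖c k * Gk b y k t‖₊ : ℝ≥0∞) ≠ ⊤ := by
    have : ∀ k : ℕ, ∫⁻ t, (‖c k * Gk b y k t‖₊ : ℝ≥0∞)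
        = ∫⁻ t, ENNReal.ofReal (|c k| * Gk b y k t) := by
      intro k
      rw [hnorm k]
    rw [tsum_congr this, lintegral_abs_terms c y b hy hb hsum]
    exact ENNReal.ofReal_ne_top
  have := integral_tsum hmeas hf'
  rw [show (fun t => ∑' k : ℕ, c k * Gk b y k t) = fbg c y b from rfl] at this
  rw [this]
  apply tsum_congr
  intro k
  rw [integral_const_mul, Gk_integral b y hb (by linarith) k]

end core

lemma coeff_summable (x b R : ℝ) (hx : 0 < x) (hb : 0 < b) (hR0 : 0 ≤ R) (hR1 : R ≤ 1) :
    Summable (fun k : ℕ => |gbc x k * R^k| * Real.exp (-(b*(k:ℝ)))) := by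
  set u := R * Real.exp (-b) with hu
  have hu0 : 0 ≤ u := mul_nonneg hR0 (Real.exp_pos _).le
  have hu1 : u < 1 := by
    have h1 : Real.exp (-b) < 1 := by
      rw [← Real.exp_zero]
      exact Real.exp_lt_exp.mpr (by linarith)
    nlinarith [Real.exp_pos (-b)]
  apply Summable.congr (summable_abs_gbc x u hx hu0 hu1)
  intro k
  have e1 : Real.exp (-(b*(k:ℝ))) = Real.exp (-b) ^ k := by
    rw [show -(b*(k:ℝ)) = (k:ℝ) * (-b) by ring, Real.exp_nat_mul]
  rw [hu, mul_pow, abs_mul, abs_of_nonneg (pow_nonneg hR0 k), e1]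
  ring

lemma fbg_nonneg_spec (x y b R : ℝ) (hx : 0 < x) (hy : 1 ≤ y) (hR0 : 0 ≤ R) (hR1 : R ≤ 1)
    (t : ℝ) : 0 ≤ fbg (fun k => gbc x k * R^k) y b t := by
  set N := Nat.ceil t with hN
  have htN : t ≤ N := Nat.le_ceil t
  rw [fbg_eq_sum _ y b t N htN]
  rw [abel_identity (fun k => gbc x k * R^k) (fun k => Gk b y k t) N]
  have h1 : 0 ≤ (∑ j ∈ Finset.range N, gbc x j * R^j) * Gk b y N t :=
    mul_nonneg (partial_sum_nonneg x R hx hR0 hR1 N) (Gk_nonneg b y N t)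
  have h2 : 0 ≤ ∑ k ∈ Finset.range N,
      (∑ j ∈ Finset.range (k+1), gbc x j * R^j) * (Gk b y k t - Gk b y (k+1) t) := by
    apply Finset.sum_nonneg
    intro k _
    exact mul_nonneg (partial_sum_nonneg x R hx hR0 hR1 (k+1))
      (by linarith [Gk_anti b y hy k t])
  linarith

lemma key_lintegral (x y b R : ℝ) (hx : 0 < x) (hy : 1 ≤ y) (hb : 0 < b)
    (hR0 : 0 ≤ R) (hR1 : R ≤ 1) :
    ∫⁻ t, ENNReal.ofReal (fbg (fun k => gbc x k * R^k) y b t)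
      = ENNReal.ofReal ((1 + R * Real.exp (-b)) ^ x * ((1/b)^y * Real.Gamma y)) := by
  set c : ℕ → ℝ := fun k => gbc x k * R^k with hc
  have hsum := coeff_summable x b R hx hb hR0 hR1
  rw [← ofReal_integral_eq_lintegral_ofReal (fbg_integrable c y b hy hb hsum)
    (Eventually.of_forall (fbg_nonneg_spec x y b R hx hy hR0 hR1))]
  rw [fbg_integral c y b hy hb hsum]
  congr 1
  set u := R * Real.exp (-b) with hu
  have hu0 : 0 ≤ u := mul_nonneg hR0 (Real.exp_pos _).le
  have hu1 : u < 1 := by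
    have h1 : Real.exp (-b) < 1 := by
      rw [← Real.exp_zero]
      exact Real.exp_lt_exp.mpr (by linarith)
    nlinarith [Real.exp_pos (-b)]
  have hs := (hasSum_gbc x u hx hu0 hu1).mul_right ((1/b)^y * Real.Gamma y)
  have hcongr : (fun k : ℕ => gbc x k * u ^ k * ((1/b)^y * Real.Gamma y))
      = fun k : ℕ => c k * (Real.exp (-(b*(k:ℝ))) * ((1/b)^y * Real.Gamma y)) := by
    funext k
    have e1 : Real.exp (-(b*(k:ℝ))) = Real.exp (-b) ^ k := by
      rw [show -(b*(k:ℝ)) = (k:ℝ) * (-b) by ring, Real.exp_nat_mul]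
    rw [hu, mul_pow, e1, hc]
    ring
  rw [hcongr] at hs
  exact hs.tsum_eq

lemma exp_mul_fbg (c : ℕ → ℝ) (y l θ : ℝ) (t : ℝ) :
    Real.exp (θ*t) * fbg c y l t = fbg c y (l-θ) t := by
  unfold fbg
  rw [← tsum_mul_left]
  apply tsum_congr
  intro k
  rw [← exp_mul_Gk l θ y k t]
  ring

theorem exists_power_R_le_one
    (r l x y : ℝ) (hr : r ∈ Set.Ioo (0:ℝ) 1) (hl : 0 < l)
    (hx : 0 < x) (hy : 1 ≤ y)
    (hR : r / (1 - r) * Real.exp l ≤ 1) :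
    ∃ μ : Measure ℝ, IsProbabilityMeasure μ ∧
      ∀ θ : ℝ, θ < l →
        ∫⁻ t, ENNReal.ofReal (Real.exp (θ * t)) ∂μ =
          ENNReal.ofReal ((1 - r + r * Real.exp θ) ^ x * (l / (l - θ)) ^ y) := by
  obtain ⟨hr0, hr1⟩ := hr
  have h1r : 0 < 1 - r := by linarith
  set R : ℝ := r / (1 - r) * Real.exp l with hRdef
  have hR0 : 0 ≤ R := by positivity
  set c : ℕ → ℝ := fun k => gbc x k * R^k with hc
  have hΓ : 0 < Real.Gamma y := Real.Gamma_pos_of_pos (by linarith)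
  set C : ℝ := (1-r)^x * l^y / Real.Gamma y with hC
  have hC0 : 0 ≤ C := by
    apply div_nonneg _ hΓ.le
    exact mul_nonneg (Real.rpow_nonneg h1r.le _) (Real.rpow_nonneg hl.le _)
  have hdens_meas : Measurable (fun t => ENNReal.ofReal (C * fbg c y l t)) :=
    ENNReal.measurable_ofReal.comp ((fbg_measurable c y l hy).const_mul C)
  set μ : Measure ℝ := volume.withDensity (fun t => ENNReal.ofReal (C * fbg c y l t)) with hμ
  have main : ∀ θ : ℝ, θ < l →
      ∫⁻ t, ENNReal.ofReal (Real.exp (θ * t)) ∂μ =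
        ENNReal.ofReal ((1 - r + r * Real.exp θ) ^ x * (l / (l - θ)) ^ y) := by
    intro θ hθ
    have hb : 0 < l - θ := by linarith
    have hg : Measurable fun t : ℝ => ENNReal.ofReal (Real.exp (θ * t)) := by
      apply Measurable.ennreal_ofReal
      exact Real.measurable_exp.comp (measurable_id.const_mul θ)
    rw [hμ, lintegral_withDensity_eq_lintegral_mul volume hdens_meas hg]
    have hptwise : ∀ t : ℝ, ((fun t => ENNReal.ofReal (C * fbg c y l t)) *
        (fun t => ENNReal.ofReal (Real.exp (θ * t)))) t
          = ENNReal.ofReal C * ENNReal.ofReal (fbg c y (l-θ) t) := by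
      intro t
      simp only [Pi.mul_apply]
      rw [← ENNReal.ofReal_mul (mul_nonneg hC0 (fbg_nonneg_spec x y l R hx hy hR0 hR t)),
        ← ENNReal.ofReal_mul hC0]
      congr 1
      rw [mul_assoc]
      congr 1
      rw [mul_comm, exp_mul_fbg c y l θ t]
    have hg2 : Measurable fun t : ℝ => ENNReal.ofReal (fbg c y (l-θ) t) := by
      apply Measurable.ennreal_ofReal
      exact fbg_measurable c y (l-θ) hy
    rw [lintegral_congr hptwise, lintegral_const_mul _ hg2]
    rw [key_lintegral x y (l-θ) R hx hy hb hR0 hR]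
    rw [← ENNReal.ofReal_mul hC0]
    congr 1
    have hexp : R * Real.exp (-(l-θ)) = r / (1-r) * Real.exp θ := by
      rw [hRdef, mul_assoc, ← Real.exp_add]
      ring_nf
    have halg1 : 1 + R * Real.exp (-(l-θ)) = (1 - r + r * Real.exp θ) / (1 - r) := by
      rw [hexp]
      field_simp
    have hpos1 : (0:ℝ) < 1 + R * Real.exp (-(l-θ)) := by
      have := mul_nonneg hR0 (Real.exp_pos (-(l-θ))).le
      linarith
    calc C * ((1 + R * Real.exp (-(l-θ))) ^ x * ((1/(l-θ))^y * Real.Gamma y))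
        = ((1-r)^x * (1 + R * Real.exp (-(l-θ))) ^ x) * (l^y * (1/(l-θ))^y)
            * (Real.Gamma y / Real.Gamma y) := by
          rw [hC]; ring
      _ = ((1-r) * (1 + R * Real.exp (-(l-θ)))) ^ x * ((l * (1/(l-θ))) ^ y) * 1 := by
          rw [← Real.mul_rpow h1r.le hpos1.le, ← Real.mul_rpow hl.le (by positivity),
            div_self hΓ.ne']
      _ = (1 - r + r * Real.exp θ) ^ x * (l / (l - θ)) ^ y := by
          rw [halg1, mul_one]
          congr 2
          · field_simp
          · field_simp
  refine ⟨μ, ⟨?_⟩, main⟩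
  have h0 := main 0 hl
  simp only [zero_mul, Real.exp_zero, mul_one, ENNReal.ofReal_one, lintegral_one, sub_zero] at h0
  rw [h0, show (1 - r + r) = (1:ℝ) by ring, div_self hl.ne', Real.one_rpow, Real.one_rpow,
    mul_one, ENNReal.ofReal_one]
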